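/- Let K be a field, n ∈ ℕ, F : Fin (n+1) → K with F i ≠ 0 for every i, and c : Fin n → K. Set B := ∑_{i : Fin n} c i · F (Fin.castSucc i) and assume B ≠ 0. Then (∏_{i : Fin (n+1)} F i)⁻¹ = ∑_{i : Fin n} c i · (B · F (Fin.last n) · ∏_{j : Fin n, j ≠ i} F (Fin.castSucc j))⁻¹. -/

import Mathlib

theorem stmt_13 {K : Type*} [Field K] (n : ℕ) (F : Fin (n + 1) → K)
    (hF : ∀ i, F i ≠ 0) (c : Fin n → K)
    (hB : (∑ i : Fin n, c i * F (Fin.castSucc i)) ≠ 0) :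
    (∏ i : Fin (n + 1), F i)⁻¹ =
      ∑ i : Fin n, c i *
        ((∑ j : Fin n, c j * F (Fin.castSucc j)) * F (Fin.last n) *
          ∏ j ∈ Finset.univ.erase i, F (Fin.castSucc j))⁻¹ := by
  set B := ∑ j : Fin n, c j * F (Fin.castSucc j) with hBdef
  set P := ∏ j : Fin n, F (Fin.castSucc j) with hPdef
  have hP : P ≠ 0 := Finset.prod_ne_zero_iff.2 fun i _ => hF _
  have hstep : ∀ i : Fin n, c i *
      (B * F (Fin.last n) * ∏ j ∈ Finset.univ.erase i, F (Fin.castSucc j))⁻¹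
      = c i * F (Fin.castSucc i) * (B * F (Fin.last n) * P)⁻¹ := by
    intro i
    have h1 : F (Fin.castSucc i) * ∏ j ∈ Finset.univ.erase i, F (Fin.castSucc j) = P :=
      Finset.mul_prod_erase Finset.univ (fun j => F (Fin.castSucc j)) (Finset.mem_univ i)
    have hE : (∏ j ∈ Finset.univ.erase i, F (Fin.castSucc j)) ≠ 0 :=
      Finset.prod_ne_zero_iff.2 fun j _ => hF _
    field_simp
    rw [← h1]
    ring_nf
  rw [Finset.sum_congr rfl fun i _ => hstep i, ← Finset.sum_mul, ← hBdef,
    Fin.prod_univ_castSucc, ← hPdef]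
  field_simp
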